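/- If η(x) = C₁ h(x) pointwise and η̄ = C₁ h̄ for the cell averages, with C₁ > 0 and h̄ > 0, then the linear scaling limiter coefficients satisfy λ_h = λ_η, and consequently the limited functions satisfy ĥη(x) = C₁ ĥh(x) for all x. -/

import Mathlib

/-- If `η = C₁ h` pointwise and for cell averages, then the linear scaling limiter
coefficients agree, and the limited functions satisfy `η̂ = C₁ ĥ`. -/
theorem pp_limiter_preserves_linear_relation {X : Type*}
    (h η : X → ℝ) (G : Finset X) (hG : G.Nonempty)
    (C₁ hbar ηbar : ℝ) (hC₁ : 0 < C₁) (hbar_pos : 0 < hbar)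
    (hrel : ∀ x, η x = C₁ * h x) (hbar_rel : ηbar = C₁ * hbar)
    (hden : 0 < hbar - G.inf' hG h) :
    min 1 (hbar / (hbar - G.inf' hG h)) = min 1 (ηbar / (ηbar - G.inf' hG η)) ∧
    ∀ x, min 1 (ηbar / (ηbar - G.inf' hG η)) * (η x - ηbar) + ηbar
        = C₁ * (min 1 (hbar / (hbar - G.inf' hG h)) * (h x - hbar) + hbar) := by
  have hinf : G.inf' hG η = C₁ * G.inf' hG h := by
    have := Finset.apply_inf'_eq_inf'_comp hG (f := h) (fun y => C₁ * y)
      (fun x y => (mul_min_of_nonneg x y hC₁.le))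
    simp only [Function.comp] at this
    simp_rw [← hrel] at this
    exact this.symm
  have hratio : ηbar / (ηbar - G.inf' hG η) = hbar / (hbar - G.inf' hG h) := by
    rw [hbar_rel, hinf, ← mul_sub, mul_div_mul_left _ _ hC₁.ne']
  refine ⟨by rw [hratio], fun x => ?_⟩
  rw [hratio, hrel x, hbar_rel]
  ring
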